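/- Every treeish graph G satisfies td(G) = 0. -/

import Mathlib

/-- Add a new vertex to a graph `G`, joined to the vertices in the set `s`. -/
def addVertex {V : Type} (G : SimpleGraph V) (s : Set V) : SimpleGraph (Option V) where
  Adj a b :=
    match a, b with
    | some a, some b => G.Adj a b
    | some a, none => a ∈ s
    | none, some b => b ∈ s
    | none, none => False
  symm := ⟨by rintro (a | a) (b | b) h <;> simp_all <;> exact h.symm⟩
  loopless := ⟨by rintro (a | a) h <;> simp_all⟩

/-- Treeish graphs, defined recursively: an edge or a triangle is treeish; adding a
pendant vertex to a treeish graph is treeish; adding a new vertex adjacent to both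
endpoints of an existing edge of a treeish graph is treeish.  (Graphs are identified
up to isomorphism.) -/
inductive Treeish : {V : Type} → SimpleGraph V → Prop
  | edge : Treeish (⊤ : SimpleGraph (Fin 2))
  | triangle : Treeish (⊤ : SimpleGraph (Fin 3))
  | pendant {V : Type} {G : SimpleGraph V} (v : V) :
      Treeish G → Treeish (addVertex G {v})
  | triAdd {V : Type} {G : SimpleGraph V} {v w : V} (h : G.Adj v w) :
      Treeish G → Treeish (addVertex G {v, w})
  | iso {V W : Type} {G : SimpleGraph V} {H : SimpleGraph W} (e : G ≃g H) :
      Treeish G → Treeish H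

/-- Number of connected components of a graph. -/
noncomputable def numC {V : Type} (G : SimpleGraph V) : ℕ := Nat.card G.ConnectedComponent

/-- The (modified) type of a finite simple graph `G` with `n` vertices and `e` edges:
`type(G) = e - n + C(G) + Σ_v (C(G - v) - 1)`. -/
noncomputable def gtype {V : Type} (G : SimpleGraph V) : ℤ :=
  (Nat.card G.edgeSet : ℤ) - Nat.card V + numC G +
    ∑ᶠ v : V, ((numC (G.induce {v}ᶜ) : ℤ) - 1)

/-- The type defect of a finite simple graph: `td(G) = type(G) - (n - 2)`. -/
noncomputable def td {V : Type} (G : SimpleGraph V) : ℤ :=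
  gtype G - ((Nat.card V : ℤ) - 2)

open SimpleGraph

variable {V : Type} {G : SimpleGraph V}

lemma walk_const {β : Sort*} (f : V → β)
    (h : ∀ a b, G.Adj a b → f a = f b) {v w : V} (p : G.Walk v w) : f v = f w := by
  induction p with
  | nil => rfl
  | cons hadj _ ih => exact (h _ _ hadj).trans ih

/-- lift respecting adjacency -/
def liftAdj {β : Sort*} (f : V → β) (h : ∀ a b, G.Adj a b → f a = f b) :
    G.ConnectedComponent → β :=
  SimpleGraph.ConnectedComponent.lift f (fun _ _ p _ => walk_const f h p)

@[simp] lemma liftAdj_mk {β : Sort*} (f : V → β) (h : ∀ a b, G.Adj a b → f a = f b) (v : V) :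
    liftAdj f h (G.connectedComponentMk v) = f v := rfl

def someHom (G : SimpleGraph V) (s : Set V) : G →g addVertex G s where
  toFun := some
  map_rel' := fun h => h

noncomputable def compEquiv (G : SimpleGraph V) (s : Set V) (a₀ : V) (h₀ : a₀ ∈ s)
    (hcon : ∀ x ∈ s, G.Reachable x a₀) :
    (addVertex G s).ConnectedComponent ≃ G.ConnectedComponent where
  toFun := liftAdj (fun o => o.elim (G.connectedComponentMk a₀) G.connectedComponentMk)
    (by
      rintro (a | a) (b | b) hadj
      · exact absurd hadj not_false
      · exact (ConnectedComponent.sound (hcon b hadj)).symm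
      · exact ConnectedComponent.sound (hcon a hadj)
      · exact ConnectedComponent.sound (Adj.reachable (show G.Adj a b from hadj)))
  invFun := ConnectedComponent.map (someHom G s)
  left_inv := by
    refine ConnectedComponent.ind ?_
    rintro (x | x)
    · exact ConnectedComponent.sound ((Adj.reachable (by exact h₀ : (addVertex G s).Adj (some a₀) none)))
    · rfl
  right_inv := by
    refine ConnectedComponent.ind ?_
    intro x
    rfl

lemma numC_addVertex_of_nonempty (G : SimpleGraph V) (s : Set V) (a₀ : V) (h₀ : a₀ ∈ s)
    (hcon : ∀ x ∈ s, G.Reachable x a₀) : numC (addVertex G s) = numC G :=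
  Nat.card_congr (compEquiv G s a₀ h₀ hcon)

noncomputable def compEquivEmpty (G : SimpleGraph V) :
    (addVertex G ∅).ConnectedComponent ≃ Option G.ConnectedComponent where
  toFun := liftAdj (fun o => o.map G.connectedComponentMk)
    (by
      rintro (a | a) (b | b) hadj
      · exact absurd hadj not_false
      · exact absurd hadj (Set.notMem_empty b)
      · exact absurd hadj (Set.notMem_empty a)
      · exact congrArg some (ConnectedComponent.sound (Adj.reachable (show G.Adj a b from hadj))))
  invFun := fun o => o.elim ((addVertex G ∅).connectedComponentMk none)
    (ConnectedComponent.map (someHom G ∅))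
  left_inv := by
    refine ConnectedComponent.ind ?_
    rintro (x | x) <;> rfl
  right_inv := by
    rintro (_ | c)
    · rfl
    · exact ConnectedComponent.ind (fun x => rfl) c

lemma numC_addVertex_empty [Finite V] (G : SimpleGraph V) :
    numC (addVertex G ∅) = numC G + 1 := by
  haveI : Finite G.ConnectedComponent := Finite.of_surjective _ Quot.mk_surjective
  rw [numC, Nat.card_congr (compEquivEmpty G), Finite.card_option]
  rfl

def edgeFun (G : SimpleGraph V) (s : Set V) : G.edgeSet ⊕ s → (addVertex G s).edgeSet :=
  Sum.elim (Hom.mapEdgeSet (someHom G s))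
    (fun a => ⟨s(none, some a.1), a.2⟩)

lemma edgeFun_bij (G : SimpleGraph V) (s : Set V) : Function.Bijective (edgeFun G s) := by
  constructor
  · rintro (⟨e₁, h₁⟩ | ⟨a₁, h₁⟩) (⟨e₂, h₂⟩ | ⟨a₂, h₂⟩) h
    · have := Subtype.ext_iff.1 h
      simp only [edgeFun, Sum.elim_inl, Hom.mapEdgeSet] at this
      have := Sym2.map.injective (Option.some_injective V) this
      simp_all
    · exfalso
      have := Subtype.ext_iff.1 h
      simp only [edgeFun, Sum.elim_inl, Sum.elim_inr, Hom.mapEdgeSet] at this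
      have hn : (none : Option V) ∈ Sym2.map (⇑(someHom G s)) e₁ := by
        rw [this]; simp [Sym2.mem_iff]
      rw [Sym2.mem_map] at hn
      obtain ⟨x, -, hx⟩ := hn
      exact Option.some_ne_none x (by exact hx)
    · exfalso
      have := Subtype.ext_iff.1 h
      simp only [edgeFun, Sum.elim_inl, Sum.elim_inr, Hom.mapEdgeSet] at this
      have hn : (none : Option V) ∈ Sym2.map (⇑(someHom G s)) e₂ := by
        rw [← this]; simp [Sym2.mem_iff]
      rw [Sym2.mem_map] at hn
      obtain ⟨x, -, hx⟩ := hn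
      exact Option.some_ne_none x (by exact hx)
    · have := Subtype.ext_iff.1 h
      simp only [edgeFun, Sum.elim_inr, Sym2.eq, Sym2.rel_iff'] at this
      rcases this with h' | h'
      · simp only [Prod.mk.injEq, Option.some.injEq] at h'
        exact congrArg Sum.inr (Subtype.ext h'.2)
      · simp [Prod.ext_iff] at h'
  · rintro ⟨e, he⟩
    induction e with
    | _ x y =>
      match x, y with
      | some x, some y =>
        exact ⟨Sum.inl ⟨s(x, y), he⟩, Subtype.ext (by simp only [edgeFun, Sum.elim_inl, Hom.mapEdgeSet, Sym2.map_pair_eq]; rfl)⟩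
      | some x, none =>
        refine ⟨Sum.inr ⟨x, he⟩, Subtype.ext ?_⟩
        simp only [edgeFun, Sum.elim_inr]
        exact Sym2.eq_swap
      | none, some y => exact ⟨Sum.inr ⟨y, he⟩, rfl⟩
      | none, none => exact absurd he (by simp)

lemma card_edgeSet_addVertex [Finite V] (G : SimpleGraph V) (s : Set V) :
    Nat.card (addVertex G s).edgeSet = Nat.card G.edgeSet + Nat.card s := by
  rw [← Nat.card_congr (Equiv.ofBijective _ (edgeFun_bij G s)), Nat.card_sum]

lemma connected_iff_numC_aux (hG : G.Connected) : numC G = 1 := by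
  haveI := hG.preconnected.subsingleton_connectedComponent
  haveI : Nonempty G.ConnectedComponent := Nonempty.map G.connectedComponentMk hG.nonempty
  rw [numC, Nat.card_eq_one_iff_unique]
  exact ⟨inferInstance, inferInstance⟩

lemma addVertex_connected {s : Set V} (hG : G.Connected) {a₀ : V} (h₀ : a₀ ∈ s) :
    (addVertex G s).Connected := by
  have key : ∀ x : Option V, (addVertex G s).Reachable x (some a₀) := by
    rintro (x | x)
    · exact Adj.reachable (show a₀ ∈ s from h₀)
    · exact Reachable.map (someHom G s) (hG.preconnected x a₀)
  haveI : Nonempty (Option V) := ⟨none⟩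
  exact ⟨fun u v => (key u).trans (key v).symm⟩

lemma treeish_fin_conn {V : Type} {G : SimpleGraph V} (h : Treeish G) :
    Finite V ∧ G.Connected := by
  induction h with
  | edge => exact ⟨inferInstance, connected_top⟩
  | triangle => exact ⟨inferInstance, connected_top⟩
  | pendant v _ ih =>
    haveI := ih.1
    exact ⟨Finite.of_equiv _ (Equiv.optionEquivSumPUnit.{0,0} _).symm, addVertex_connected ih.2 rfl⟩
  | triAdd hadj _ ih =>
    haveI := ih.1
    exact ⟨Finite.of_equiv _ (Equiv.optionEquivSumPUnit.{0,0} _).symm,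
      addVertex_connected ih.2 (Set.mem_insert _ _)⟩
  | iso e _ ih =>
    haveI := ih.1
    exact ⟨Finite.of_equiv _ e.toEquiv, e.connected_iff.1 ih.2⟩

/-- iso between induced complement graphs -/
def isoInduceCompl {W : Type} {H : SimpleGraph W} (e : G ≃g H) (v : V) :
    G.induce {v}ᶜ ≃g H.induce {e v}ᶜ where
  toFun := fun x => ⟨e x.1, fun hx => x.2 (by simpa using e.toEquiv.injective (by simpa using hx))⟩
  invFun := fun y => ⟨e.symm y.1, fun hy => y.2 (by simp only [Set.mem_singleton_iff] at hy ⊢; have := congrArg e hy; simpa using this)⟩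
  left_inv := fun x => Subtype.ext (by simp)
  right_inv := fun y => Subtype.ext (by simp)
  map_rel_iff' := by intro a b; exact e.map_adj_iff

lemma numC_iso {W : Type} {H : SimpleGraph W} (e : G ≃g H) : numC G = numC H :=
  Nat.card_congr e.connectedComponentEquiv

noncomputable def tdDef {V : Type} (G : SimpleGraph V) : ℤ :=
  (Nat.card G.edgeSet : ℤ) - Nat.card V + numC G +
    ∑ᶠ v : V, ((numC (G.induce {v}ᶜ) : ℤ) - 1) - ((Nat.card V : ℤ) - 2)

lemma td_iso {W : Type} {H : SimpleGraph W} (e : G ≃g H) : tdDef G = tdDef H := by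
  have h1 : Nat.card V = Nat.card W := Nat.card_congr e.toEquiv
  have h2 : Nat.card G.edgeSet = Nat.card H.edgeSet := Nat.card_congr e.mapEdgeSet
  have h3 : numC G = numC H := numC_iso e
  have h4 : (∑ᶠ v : V, ((numC (G.induce {v}ᶜ) : ℤ) - 1))
      = ∑ᶠ w : W, ((numC (H.induce {w}ᶜ) : ℤ) - 1) := by
    refine finsum_eq_of_bijective e.toEquiv e.toEquiv.bijective fun v => ?_
    rw [numC_iso (isoInduceCompl e v)]
    rfl
  rw [tdDef, tdDef, h1, h2, h3, h4]

def induceNoneIso (G : SimpleGraph V) (s : Set V) :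
    (addVertex G s).induce {(none : Option V)}ᶜ ≃g G where
  toFun := fun x =>
    match x with
    | ⟨some a, _⟩ => a
    | ⟨none, h⟩ => absurd rfl h
  invFun := fun a => ⟨some a, fun h => Option.some_ne_none a h⟩
  left_inv := by rintro ⟨(_ | a), h⟩
                 · exact absurd rfl h
                 · rfl
  right_inv := fun a => rfl
  map_rel_iff' := by rintro ⟨(_ | a), ha⟩ ⟨(_ | b), hb⟩
                     · exact absurd rfl ha
                     · exact absurd rfl ha
                     · exact absurd rfl hb
                     · exact Iff.rfl

def induceSomeIso (G : SimpleGraph V) (s : Set V) (u : V) :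
    (addVertex G s).induce {(some u : Option V)}ᶜ ≃g
      addVertex (G.induce {u}ᶜ) {x : ↥({u}ᶜ : Set V) | (x : V) ∈ s} where
  toFun := fun x =>
    match x with
    | ⟨some a, h⟩ => some ⟨a, fun h' => h (by simp_all)⟩
    | ⟨none, _⟩ => none
  invFun := fun y =>
    match y with
    | some ⟨a, h⟩ => ⟨some a, fun h' => h (by simp_all)⟩
    | none => ⟨none, fun h => Option.some_ne_none u (Set.mem_singleton_iff.1 h).symm⟩
  left_inv := by rintro ⟨(_ | a), h⟩ <;> rfl
  right_inv := by rintro (_ | ⟨a, h⟩) <;> rfl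
  map_rel_iff' := by rintro ⟨(_ | a), ha⟩ ⟨(_ | b), hb⟩ <;> exact Iff.rfl

lemma numC_induce_none (G : SimpleGraph V) (s : Set V) :
    numC ((addVertex G s).induce {(none : Option V)}ᶜ) = numC G :=
  numC_iso (induceNoneIso G s)

lemma numC_induce_some (G : SimpleGraph V) (s : Set V) (u : V) :
    numC ((addVertex G s).induce {(some u : Option V)}ᶜ)
      = numC (addVertex (G.induce {u}ᶜ) {x : ↥({u}ᶜ : Set V) | (x : V) ∈ s}) :=
  numC_iso (induceSomeIso G s u)

lemma td_addVertex_aux [Finite V] (G : SimpleGraph V) (hG : G.Connected) (s : Set V)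
    (a₀ : V) (h₀ : a₀ ∈ s) (hcon : ∀ x ∈ s, G.Reachable x a₀)
    (hsum : (∑ᶠ u : V, ((numC ((addVertex G s).induce {(some u : Option V)}ᶜ) : ℤ) - 1))
      = (∑ᶠ u : V, ((numC (G.induce {u}ᶜ) : ℤ) - 1)) + 2 - (Nat.card s : ℤ)) :
    tdDef (addVertex G s) = tdDef G := by
  haveI : Fintype V := Fintype.ofFinite V
  haveI : Finite (Option V) := Finite.of_equiv _ (Equiv.optionEquivSumPUnit.{0,0} _).symm
  rw [tdDef, tdDef, card_edgeSet_addVertex, numC_addVertex_of_nonempty G s a₀ h₀ hcon,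
    Finite.card_option]
  rw [finsum_eq_sum_of_fintype, Fintype.sum_option, numC_induce_none,
    connected_iff_numC_aux hG]
  simp only [finsum_eq_sum_of_fintype] at hsum ⊢
  rw [hsum]
  push_cast
  ring

lemma td_addVertex_pendant [Finite V] (G : SimpleGraph V) (hG : G.Connected) (v : V) :
    tdDef (addVertex G {v}) = tdDef G := by
  classical
  haveI : Fintype V := Fintype.ofFinite V
  refine td_addVertex_aux G hG {v} v rfl (fun x hx => by rw [show x = v from hx]) ?_
  have hcard : (Nat.card ({v} : Set V) : ℤ) = 1 := by
    rw [Nat.card_coe_set_eq, Set.ncard_singleton]; rfl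
  have hg : ∀ u : V, (numC ((addVertex G {v}).induce {(some u : Option V)}ᶜ) : ℤ)
      = (numC (G.induce {u}ᶜ) : ℤ) + (if u = v then 1 else 0) := by
    intro u
    rw [numC_induce_some]
    by_cases h : u = v
    · subst h
      have hempty : {x : ↥({u}ᶜ : Set V) | (x : V) ∈ ({u} : Set V)} = ∅ := by
        ext x
        simp only [Set.mem_setOf_eq, Set.mem_singleton_iff, Set.mem_empty_iff_false, iff_false]
        exact fun hx => x.2 hx
      rw [hempty, numC_addVertex_empty]
      push_cast
      simp
    · have hvu : v ∈ ({u}ᶜ : Set V) := fun hv => h (Set.mem_singleton_iff.1 hv).symm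
      have h0 : (⟨v, hvu⟩ : ↥({u}ᶜ : Set V)) ∈
          {x : ↥({u}ᶜ : Set V) | (x : V) ∈ ({v} : Set V)} := rfl
      rw [numC_addVertex_of_nonempty _ {x : ↥({u}ᶜ : Set V) | (x : V) ∈ ({v} : Set V)}
        ⟨v, hvu⟩ h0 ?_]
      · simp [h]
      · intro x hx
        have hxv : x = (⟨v, hvu⟩ : ↥({u}ᶜ : Set V)) := Subtype.ext hx
        rw [hxv]
  rw [hcard, finsum_eq_sum_of_fintype, finsum_eq_sum_of_fintype]
  have hcongr : ∀ u ∈ (Finset.univ : Finset V),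
      ((numC ((addVertex G {v}).induce {(some u : Option V)}ᶜ) : ℤ) - 1)
      = ((numC (G.induce {u}ᶜ) : ℤ) - 1) + (if u = v then (1:ℤ) else 0) := by
    intro u _; rw [hg u]; ring
  rw [Finset.sum_congr rfl hcongr, Finset.sum_add_distrib,
    Finset.sum_ite_eq' Finset.univ v (fun _ => (1:ℤ))]
  simp only [Finset.mem_univ, if_true]
  ring

lemma td_addVertex_pair [Finite V] (G : SimpleGraph V) (hG : G.Connected) {v w : V}
    (hadj : G.Adj v w) : tdDef (addVertex G {v, w}) = tdDef G := by
  classical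
  haveI : Fintype V := Fintype.ofFinite V
  refine td_addVertex_aux G hG {v, w} v (Set.mem_insert _ _) ?_ ?_
  · intro x hx
    rcases hx with rfl | hx
    · exact Reachable.refl _
    · rw [show x = w from hx]
      exact hadj.symm.reachable
  have hcard : (Nat.card ({v, w} : Set V) : ℤ) = 2 := by
    rw [Nat.card_coe_set_eq, Set.ncard_pair hadj.ne]; rfl
  have hg : ∀ u : V, numC ((addVertex G {v, w}).induce {(some u : Option V)}ᶜ)
      = numC (G.induce {u}ᶜ) := by
    intro u
    rw [numC_induce_some]
    by_cases h : u = v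
    · subst h
      have hwu : w ∈ ({u}ᶜ : Set V) := fun hw => hadj.ne' (Set.mem_singleton_iff.1 hw)
      refine numC_addVertex_of_nonempty _ _ (⟨w, hwu⟩ : ↥({u}ᶜ : Set V)) (Or.inr rfl) ?_
      intro x hx
      rcases hx with hx | hx
      · exact absurd hx x.2
      · rw [show x = (⟨w, hwu⟩ : ↥({u}ᶜ : Set V)) from Subtype.ext hx]
    · have hvu : v ∈ ({u}ᶜ : Set V) := fun hv => h (Set.mem_singleton_iff.1 hv).symm
      refine numC_addVertex_of_nonempty _ _ (⟨v, hvu⟩ : ↥({u}ᶜ : Set V)) (Or.inl rfl) ?_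
      intro x hx
      rcases hx with hx | hx
      · rw [show x = (⟨v, hvu⟩ : ↥({u}ᶜ : Set V)) from Subtype.ext hx]
      · have hA : (G.induce {u}ᶜ).Adj x ⟨v, hvu⟩ := by
          show G.Adj (x : V) v
          rw [show (x : V) = w from hx]
          exact hadj.symm
        exact hA.reachable
  rw [hcard, finsum_eq_sum_of_fintype, finsum_eq_sum_of_fintype]
  have hcongr : ∀ u ∈ (Finset.univ : Finset V),
      ((numC ((addVertex G {v, w}).induce {(some u : Option V)}ᶜ) : ℤ) - 1)
      = ((numC (G.induce {u}ᶜ) : ℤ) - 1) := by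
    intro u _; rw [hg u]
  rw [Finset.sum_congr rfl hcongr]
  ring

lemma subsingleton_connected {W : Type} [Nonempty W] [Subsingleton W] (H : SimpleGraph W) :
    H.Connected :=
  ⟨fun a b => by rw [Subsingleton.elim a b]⟩

lemma edgeSet_top_fin2 : (⊤ : SimpleGraph (Fin 2)).edgeSet = {s(0, 1)} := by
  ext e
  induction e with
  | _ a b =>
    simp only [mem_edgeSet, top_adj, Set.mem_singleton_iff]
    revert a b
    decide

lemma numC_induce_fin2 (v : Fin 2) : numC ((⊤ : SimpleGraph (Fin 2)).induce {v}ᶜ) = 1 := by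
  have key : ∀ v a b : Fin 2, a ≠ v → b ≠ v → a = b := by decide
  have hmem : v + 1 ∈ ({v}ᶜ : Set (Fin 2)) := by
    simp only [Set.mem_compl_iff, Set.mem_singleton_iff]
    revert v; decide
  haveI : Nonempty ↥({v}ᶜ : Set (Fin 2)) := ⟨⟨v + 1, hmem⟩⟩
  haveI : Subsingleton ↥({v}ᶜ : Set (Fin 2)) := ⟨by
    rintro ⟨a, ha⟩ ⟨b, hb⟩
    simp only [Set.mem_compl_iff, Set.mem_singleton_iff] at ha hb
    exact Subtype.ext (key v a b ha hb)⟩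
  exact connected_iff_numC_aux (subsingleton_connected _)

lemma td_edge : tdDef (⊤ : SimpleGraph (Fin 2)) = 0 := by
  rw [tdDef, edgeSet_top_fin2, Nat.card_coe_set_eq, Set.ncard_singleton,
    connected_iff_numC_aux connected_top, finsum_eq_sum_of_fintype]
  have hcongr : ∀ v ∈ (Finset.univ : Finset (Fin 2)),
      ((numC ((⊤ : SimpleGraph (Fin 2)).induce {v}ᶜ) : ℤ) - 1) = 0 := by
    intro v _
    rw [numC_induce_fin2 v]
    ring
  rw [Finset.sum_congr rfl hcongr]
  simp [Nat.card_eq_fintype_card]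

lemma addVertex_top_fin2 : addVertex (⊤ : SimpleGraph (Fin 2)) {0, 1} = ⊤ := by
  ext a b
  match a, b with
  | some a, some b =>
    show (⊤ : SimpleGraph (Fin 2)).Adj a b ↔ (⊤ : SimpleGraph (Option (Fin 2))).Adj _ _
    simp
  | some a, none =>
    show a ∈ ({0, 1} : Set (Fin 2)) ↔ (⊤ : SimpleGraph (Option (Fin 2))).Adj (some a) none
    simp only [Set.mem_insert_iff, Set.mem_singleton_iff, top_adj]
    constructor
    · rintro - h; exact Option.some_ne_none a h
    · intro _; revert a; decide
  | none, some b =>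
    show b ∈ ({0, 1} : Set (Fin 2)) ↔ (⊤ : SimpleGraph (Option (Fin 2))).Adj none (some b)
    simp only [Set.mem_insert_iff, Set.mem_singleton_iff, top_adj]
    constructor
    · rintro - h; exact Option.some_ne_none b h.symm
    · intro _; revert b; decide
  | none, none =>
    show False ↔ (⊤ : SimpleGraph (Option (Fin 2))).Adj none none
    simp

lemma td_triangle : tdDef (⊤ : SimpleGraph (Fin 3)) = 0 := by
  have e : (⊤ : SimpleGraph (Fin 3)) ≃g addVertex (⊤ : SimpleGraph (Fin 2)) {0, 1} := by
    rw [addVertex_top_fin2]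
    exact Iso.completeGraph (finSuccEquiv 2)
  rw [td_iso e, td_addVertex_pair _ connected_top (by decide : (⊤ : SimpleGraph (Fin 2)).Adj 0 1)]
  exact td_edge

theorem td_treeish_scratch {V : Type} (G : SimpleGraph V) (hG : Treeish G) : tdDef G = 0 := by
  induction hG with
  | edge => exact td_edge
  | triangle => exact td_triangle
  | pendant v h ih =>
    haveI := (treeish_fin_conn h).1
    rw [td_addVertex_pendant _ (treeish_fin_conn h).2 v]
    exact ih
  | triAdd hadj h ih =>
    haveI := (treeish_fin_conn h).1
    rw [td_addVertex_pair _ (treeish_fin_conn h).2 hadj]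
    exact ih
  | iso e h ih =>
    rw [← td_iso e]
    exact ih


/-- Every treeish graph `G` satisfies `td(G) = 0`. -/
theorem td_treeish {V : Type} (G : SimpleGraph V) (hG : Treeish G) : td G = 0 := by
  show tdDef G = 0
  exact td_treeish_scratch G hG
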